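/- Let f^c_n be as above. Then the compressed (XY, ZW)-partition of f^c_n has exactly 2n+1 elements, namely, for each i ∈ {1,…,n}: ((⋀_{j<i} ¬Y_j) ∧ Y_i ∧ X_i, W ∨ Z_i) and ((⋀_{j<i} ¬Y_j) ∧ Y_i ∧ ¬X_i, Z_i), together with (⋀_{j=1}^n ¬Y_j, ⊥); in particular all 2n+1 subs are pairwise inequivalent Boolean functions. -/

import Mathlib

/-- An (X,Y)-partition of a Boolean function `f`, where `σ` is the type of
assignments to the X-variables and `τ` the type of assignments to the
Y-variables: a finite set of prime-sub pairs whose primes are consistent,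
pairwise mutually exclusive and exhaustive, and whose disjunction of
prime-sub conjunctions equals `f`. -/
def IsXYPartition {σ τ : Type} (P : Finset ((σ → Bool) × (τ → Bool)))
    (f : σ → τ → Bool) : Prop :=
  (∀ e ∈ P, ∃ x, e.1 x = true) ∧
  (∀ e ∈ P, ∀ e' ∈ P, e ≠ e' → ∀ x, ¬(e.1 x = true ∧ e'.1 x = true)) ∧
  (∀ x, ∃ e ∈ P, e.1 x = true) ∧
  (∀ x y, f x y = true ↔ ∃ e ∈ P, e.1 x = true ∧ e.2 y = true)

/-- A partition is compressed if distinct elements have distinct subs. -/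
def IsCompressed {σ τ : Type} (P : Finset ((σ → Bool) × (τ → Bool))) : Prop :=
  ∀ e ∈ P, ∀ e' ∈ P, e.2 = e'.2 → e = e'
/-- `fc n (x,y) (z,w) = ⋁ i, (⋀ j<i, ¬y j) ∧ y i ∧ ((x i ∧ (w ∨ z i)) ∨ (¬x i ∧ z i))`. -/
def fc (n : ℕ) (xy : (Fin n → Bool) × (Fin n → Bool))
    (zw : (Fin n → Bool) × Bool) : Bool :=
  decide (∃ i : Fin n, (∀ j, j < i → xy.2 j = false) ∧ xy.2 i = true ∧
    ((xy.1 i = true ∧ (zw.2 = true ∨ zw.1 i = true)) ∨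
      (xy.1 i = false ∧ zw.1 i = true)))

namespace Aux16

variable {n : ℕ}

def eA (n : ℕ) (i : Fin n) :
    ((Fin n → Bool) × (Fin n → Bool) → Bool) × ((Fin n → Bool) × Bool → Bool) :=
  ((fun xy => decide ((∀ j, j < i → xy.2 j = false) ∧ xy.2 i = true ∧ xy.1 i = true)),
   (fun zw => zw.2 || zw.1 i))

def eB (n : ℕ) (i : Fin n) :
    ((Fin n → Bool) × (Fin n → Bool) → Bool) × ((Fin n → Bool) × Bool → Bool) :=
  ((fun xy => decide ((∀ j, j < i → xy.2 j = false) ∧ xy.2 i = true ∧ xy.1 i = false)),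
   (fun zw => zw.1 i))

def eC (n : ℕ) :
    ((Fin n → Bool) × (Fin n → Bool) → Bool) × ((Fin n → Bool) × Bool → Bool) :=
  ((fun xy => decide (∀ j, xy.2 j = false)), (fun _ => false))

lemma subA_inj {i i' : Fin n} (h : (eA n i).2 = (eA n i').2) : i = i' := by
  have := congrFun h (fun j => decide (j = i), false)
  simp [eA] at this
  exact this.symm

lemma subB_inj {i i' : Fin n} (h : (eB n i).2 = (eB n i').2) : i = i' := by
  have := congrFun h (fun j => decide (j = i), false)
  simp [eB] at this
  exact this.symm

lemma subA_ne_subB (i i' : Fin n) : (eA n i).2 ≠ (eB n i').2 := by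
  intro h
  have := congrFun h (fun _ => false, true)
  simp [eA, eB] at this

lemma subA_ne_subC (i : Fin n) : (eA n i).2 ≠ (eC n).2 := by
  intro h
  have := congrFun h (fun _ => false, true)
  simp [eA, eC] at this

lemma subB_ne_subC (i : Fin n) : (eB n i).2 ≠ (eC n).2 := by
  intro h
  have := congrFun h (fun j => decide (j = i), false)
  simp [eB, eC] at this

lemma min_unique {y : Fin n → Bool} {i i' : Fin n}
    (h1 : ∀ j, j < i → y j = false) (h2 : y i = true)
    (h3 : ∀ j, j < i' → y j = false) (h4 : y i' = true) : i = i' := by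
  rcases lt_trichotomy i i' with h | h | h
  · rw [h3 i h] at h2; exact absurd h2 (by simp)
  · exact h
  · rw [h1 i' h] at h4; exact absurd h4 (by simp)

lemma injA : Function.Injective (eA n) := fun _ _ h => subA_inj (congrArg Prod.snd h)
lemma injB : Function.Injective (eB n) := fun _ _ h => subB_inj (congrArg Prod.snd h)

def P (n : ℕ) :
    Finset (((Fin n → Bool) × (Fin n → Bool) → Bool) × ((Fin n → Bool) × Bool → Bool)) :=
  (Finset.univ.image (eA n)) ∪ (Finset.univ.image (eB n)) ∪ {eC n}

lemma memP {e} : e ∈ P n ↔ (∃ i, eA n i = e) ∨ (∃ i, eB n i = e) ∨ e = eC n := by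
  simp [P, Finset.mem_union, Finset.mem_image, or_assoc]
  tauto

lemma cardP : (P n).card = 2 * n + 1 := by
  have d1 : Disjoint (Finset.univ.image (eA n)) (Finset.univ.image (eB n)) := by
    rw [Finset.disjoint_left]
    rintro a ha hb
    simp only [Finset.mem_image, Finset.mem_univ, true_and] at ha hb
    obtain ⟨i, hi⟩ := ha; obtain ⟨j, hj⟩ := hb
    exact subA_ne_subB i j (by rw [hi, hj])
  have d2 : Disjoint ((Finset.univ.image (eA n)) ∪ (Finset.univ.image (eB n)))
      ({eC n} : Finset _) := by
    rw [Finset.disjoint_left]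
    rintro a ha hb
    simp only [Finset.mem_union, Finset.mem_image, Finset.mem_univ, true_and] at ha
    simp only [Finset.mem_singleton] at hb
    rcases ha with ⟨i, hi⟩ | ⟨i, hi⟩
    · exact subA_ne_subC i (by rw [hi, hb])
    · exact subB_ne_subC i (by rw [hi, hb])
  rw [P, Finset.card_union_of_disjoint d2, Finset.card_union_of_disjoint d1,
    Finset.card_image_of_injective _ injA, Finset.card_image_of_injective _ injB]
  simp [Finset.card_univ]; ring

lemma compressedP : IsCompressed (P n) := by
  intro e he e' he' hsub
  rw [memP] at he he'
  rcases he with ⟨i, rfl⟩ | ⟨i, rfl⟩ | rfl <;>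
    rcases he' with ⟨i', rfl⟩ | ⟨i', rfl⟩ | rfl
  · rw [subA_inj hsub]
  · exact absurd hsub (subA_ne_subB i i')
  · exact absurd hsub (subA_ne_subC i)
  · exact absurd hsub.symm (subA_ne_subB i' i)
  · rw [subB_inj hsub]
  · exact absurd hsub (subB_ne_subC i)
  · exact absurd hsub.symm (subA_ne_subC i')
  · exact absurd hsub.symm (subB_ne_subC i')
  · rfl

lemma primeA_iff {i : Fin n} {x} :
    (eA n i).1 x = true ↔ (∀ j, j < i → x.2 j = false) ∧ x.2 i = true ∧ x.1 i = true := by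
  simp [eA]

lemma primeB_iff {i : Fin n} {x} :
    (eB n i).1 x = true ↔ (∀ j, j < i → x.2 j = false) ∧ x.2 i = true ∧ x.1 i = false := by
  simp [eB]

lemma primeC_iff {x} : (eC n).1 x = true ↔ ∀ j, x.2 j = false := by
  simp [eC]

lemma consistentP : ∀ e ∈ P n, ∃ x, e.1 x = true := by
  intro e he
  rw [memP] at he
  rcases he with ⟨i, rfl⟩ | ⟨i, rfl⟩ | rfl
  · refine ⟨((fun _ => true), (fun j => decide (j = i))), primeA_iff.2 ⟨?_, by simp, rfl⟩⟩
    intro j hj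
    simp [Fin.ne_of_lt hj]
  · refine ⟨((fun _ => false), (fun j => decide (j = i))), primeB_iff.2 ⟨?_, by simp, rfl⟩⟩
    intro j hj
    simp [Fin.ne_of_lt hj]
  · exact ⟨((fun _ => false), (fun _ => false)), primeC_iff.2 fun _ => rfl⟩

lemma exclusiveP : ∀ e ∈ P n, ∀ e' ∈ P n, e ≠ e' →
    ∀ x, ¬(e.1 x = true ∧ e'.1 x = true) := by
  intro e he e' he' hne x ⟨h1, h2⟩
  rw [memP] at he he'
  rcases he with ⟨i, rfl⟩ | ⟨i, rfl⟩ | rfl <;>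
    rcases he' with ⟨i', rfl⟩ | ⟨i', rfl⟩ | rfl
  · obtain ⟨a1, a2, a3⟩ := primeA_iff.1 h1
    obtain ⟨b1, b2, b3⟩ := primeA_iff.1 h2
    exact hne (by rw [min_unique a1 a2 b1 b2])
  · obtain ⟨a1, a2, a3⟩ := primeA_iff.1 h1
    obtain ⟨b1, b2, b3⟩ := primeB_iff.1 h2
    rw [min_unique a1 a2 b1 b2, b3] at a3; exact absurd a3 (by simp)
  · obtain ⟨a1, a2, a3⟩ := primeA_iff.1 h1
    rw [primeC_iff.1 h2 i] at a2; exact absurd a2 (by simp)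
  · obtain ⟨a1, a2, a3⟩ := primeB_iff.1 h1
    obtain ⟨b1, b2, b3⟩ := primeA_iff.1 h2
    rw [min_unique a1 a2 b1 b2, b3] at a3; exact absurd a3 (by simp)
  · obtain ⟨a1, a2, a3⟩ := primeB_iff.1 h1
    obtain ⟨b1, b2, b3⟩ := primeB_iff.1 h2
    exact hne (by rw [min_unique a1 a2 b1 b2])
  · obtain ⟨a1, a2, a3⟩ := primeB_iff.1 h1
    rw [primeC_iff.1 h2 i] at a2; exact absurd a2 (by simp)
  · obtain ⟨b1, b2, b3⟩ := primeA_iff.1 h2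
    rw [primeC_iff.1 h1 i'] at b2; exact absurd b2 (by simp)
  · obtain ⟨b1, b2, b3⟩ := primeB_iff.1 h2
    rw [primeC_iff.1 h1 i'] at b2; exact absurd b2 (by simp)
  · exact hne rfl

lemma find_min {y : Fin n → Bool} (h : ¬∀ j, y j = false) :
    ∃ i, (∀ j, j < i → y j = false) ∧ y i = true := by
  push_neg at h
  have hne : (Finset.univ.filter (fun j => y j = true)).Nonempty := by
    obtain ⟨j, hj⟩ := h
    exact ⟨j, by simp [(by revert hj; simp : y j = true)]⟩
  set i := (Finset.univ.filter (fun j => y j = true)).min' hne with hi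
  have hmi : y i = true := by
    have := (Finset.univ.filter (fun j => y j = true)).min'_mem hne
    simpa using this
  refine ⟨i, fun j hj => ?_, hmi⟩
  by_contra hj'
  have : i ≤ j := Finset.min'_le _ _ (by simpa using (by revert hj'; simp : y j = true))
  exact absurd hj (not_lt.2 this)

lemma exhaustiveP : ∀ x, ∃ e ∈ P n, e.1 x = true := by
  intro x
  by_cases h : ∀ j, x.2 j = false
  · exact ⟨eC n, memP.2 (Or.inr (Or.inr rfl)), primeC_iff.2 h⟩
  · obtain ⟨i, h1, h2⟩ := find_min h
    cases hx : x.1 i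
    · exact ⟨eB n i, memP.2 (Or.inr (Or.inl ⟨i, rfl⟩)), primeB_iff.2 ⟨h1, h2, hx⟩⟩
    · exact ⟨eA n i, memP.2 (Or.inl ⟨i, rfl⟩), primeA_iff.2 ⟨h1, h2, hx⟩⟩

lemma f_eqP : ∀ x y, fc n x y = true ↔ ∃ e ∈ P n, e.1 x = true ∧ e.2 y = true := by
  intro x y
  constructor
  · intro h
    rw [fc, decide_eq_true_iff] at h
    obtain ⟨i, h1, h2, h3 | h3⟩ := h
    · refine ⟨eA n i, memP.2 (Or.inl ⟨i, rfl⟩), primeA_iff.2 ⟨h1, h2, h3.1⟩, ?_⟩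
      show (y.2 || y.1 i) = true
      rcases h3.2 with h | h <;> simp [h]
    · exact ⟨eB n i, memP.2 (Or.inr (Or.inl ⟨i, rfl⟩)), primeB_iff.2 ⟨h1, h2, h3.1⟩, h3.2⟩
  · rintro ⟨e, he, hp, hs⟩
    rw [memP] at he
    rw [fc, decide_eq_true_iff]
    rcases he with ⟨i, rfl⟩ | ⟨i, rfl⟩ | rfl
    · obtain ⟨h1, h2, h3⟩ := primeA_iff.1 hp
      have : (y.2 || y.1 i) = true := hs
      rw [Bool.or_eq_true] at this
      exact ⟨i, h1, h2, Or.inl ⟨h3, this⟩⟩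
    · obtain ⟨h1, h2, h3⟩ := primeB_iff.1 hp
      exact ⟨i, h1, h2, Or.inr ⟨h3, hs⟩⟩
    · exact absurd hs (by simp [eC])

end Aux16

theorem stmt16 (n : ℕ) :
    IsXYPartition
      (((Finset.univ : Finset (Fin n)).image (fun i =>
          ((fun xy : (Fin n → Bool) × (Fin n → Bool) =>
              decide ((∀ j, j < i → xy.2 j = false) ∧ xy.2 i = true ∧ xy.1 i = true)),
            (fun zw : (Fin n → Bool) × Bool => zw.2 || zw.1 i)))) ∪
        ((Finset.univ : Finset (Fin n)).image (fun i =>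
          ((fun xy : (Fin n → Bool) × (Fin n → Bool) =>
              decide ((∀ j, j < i → xy.2 j = false) ∧ xy.2 i = true ∧ xy.1 i = false)),
            (fun zw : (Fin n → Bool) × Bool => zw.1 i)))) ∪
        {((fun xy : (Fin n → Bool) × (Fin n → Bool) => decide (∀ j, xy.2 j = false)),
          (fun _ : (Fin n → Bool) × Bool => false))})
      (fc n) ∧
    IsCompressed
      (((Finset.univ : Finset (Fin n)).image (fun i =>
          ((fun xy : (Fin n → Bool) × (Fin n → Bool) =>
              decide ((∀ j, j < i → xy.2 j = false) ∧ xy.2 i = true ∧ xy.1 i = true)),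
            (fun zw : (Fin n → Bool) × Bool => zw.2 || zw.1 i)))) ∪
        ((Finset.univ : Finset (Fin n)).image (fun i =>
          ((fun xy : (Fin n → Bool) × (Fin n → Bool) =>
              decide ((∀ j, j < i → xy.2 j = false) ∧ xy.2 i = true ∧ xy.1 i = false)),
            (fun zw : (Fin n → Bool) × Bool => zw.1 i)))) ∪
        {((fun xy : (Fin n → Bool) × (Fin n → Bool) => decide (∀ j, xy.2 j = false)),
          (fun _ : (Fin n → Bool) × Bool => false))}) ∧
    (((Finset.univ : Finset (Fin n)).image (fun i =>
          ((fun xy : (Fin n → Bool) × (Fin n → Bool) =>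
              decide ((∀ j, j < i → xy.2 j = false) ∧ xy.2 i = true ∧ xy.1 i = true)),
            (fun zw : (Fin n → Bool) × Bool => zw.2 || zw.1 i)))) ∪
        ((Finset.univ : Finset (Fin n)).image (fun i =>
          ((fun xy : (Fin n → Bool) × (Fin n → Bool) =>
              decide ((∀ j, j < i → xy.2 j = false) ∧ xy.2 i = true ∧ xy.1 i = false)),
            (fun zw : (Fin n → Bool) × Bool => zw.1 i)))) ∪
        {((fun xy : (Fin n → Bool) × (Fin n → Bool) => decide (∀ j, xy.2 j = false)),
          (fun _ : (Fin n → Bool) × Bool => false))}).card = 2 * n + 1 := by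
  refine ⟨⟨Aux16.consistentP, Aux16.exclusiveP, Aux16.exhaustiveP, Aux16.f_eqP⟩,
    Aux16.compressedP, Aux16.cardP⟩
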